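/- Let t0 ≠ 0 and let λ be analytic at t0 with λ(t0) = 0, satisfying the Painlevé III' equation with parameters χ0, χ∞ on a punctured neighborhood of t0, and set e = λ'(t0) (so e² = 1). Then the second derivative satisfies λ''(t0) = (e − χ0)/t0. -/

import Mathlib

open Filter Topology

/-- The Painlevé III' equation with parameters `χ0`, `χ∞`, stated at a point `t`. -/
def PIIIp (χ0 χinf : ℂ) (l : ℂ → ℂ) (t : ℂ) : Prop :=
  deriv (deriv l) t =
    (deriv l t) ^ 2 / l t - deriv l t / t - χinf * (l t) ^ 2 / t ^ 2
      + (l t) ^ 3 / t ^ 2 + χ0 / t - 1 / l t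

lemma analyticAt_deriv' {f : ℂ → ℂ} {x : ℂ} (h : AnalyticAt ℂ f x) :
    AnalyticAt ℂ (deriv f) x := by
  have h2 := ((ContinuousLinearMap.apply ℂ ℂ (1:ℂ)).analyticAt (fderiv ℂ f x)).comp h.fderiv
  exact h2.congr (by filter_upwards with t; rfl)

theorem stmt2 (t0 χ0 χinf e : ℂ) (l : ℂ → ℂ) (ht0 : t0 ≠ 0)
    (hl : AnalyticAt ℂ l t0) (hz : l t0 = 0)
    (heq : ∀ᶠ t in nhdsWithin t0 {t0}ᶜ, l t ≠ 0 → PIIIp χ0 χinf l t)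
    (he : deriv l t0 = e) (he2 : e ^ 2 = 1) :
    deriv (deriv l) t0 = (e - χ0) / t0 := by
  set L := deriv (deriv l) t0 with hL
  have hd : AnalyticAt ℂ (deriv l) t0 := analyticAt_deriv' hl
  have hdd : AnalyticAt ℂ (deriv (deriv l)) t0 := analyticAt_deriv' hd
  have he0 : e ≠ 0 := by
    intro h; rw [h] at he2; norm_num at he2
  have hne : ∀ᶠ t in 𝓝[≠] t0, l t ≠ 0 := by
    rcases hl.eventually_eq_zero_or_eventually_ne_zero with h | h
    · exfalso
      have h' : l =ᶠ[𝓝 t0] fun _ => (0:ℂ) := h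
      have : deriv l t0 = 0 := by rw [h'.deriv_eq]; simp
      exact he0 (by rw [← he, this])
    · exact h
  -- slope limits
  have hld : HasDerivAt l e t0 := by
    have := hl.differentiableAt.hasDerivAt; rwa [he] at this
  have hslope1 : Tendsto (slope l t0) (𝓝[≠] t0) (𝓝 e) :=
    hasDerivAt_iff_tendsto_slope.mp hld
  have hg : HasDerivAt (fun t => (deriv l t) ^ 2) (2 * e * L) t0 := by
    have h1 : HasDerivAt (deriv l) L t0 := hd.differentiableAt.hasDerivAt
    have := h1.pow 2
    norm_num at this
    exact (by simpa [he, mul_comm, mul_assoc, mul_left_comm] using this : HasDerivAt (deriv l ^ 2) (2 * e * L) t0)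
  have hslope2 : Tendsto (slope (fun t => (deriv l t) ^ 2) t0) (𝓝[≠] t0) (𝓝 (2 * e * L)) :=
    hasDerivAt_iff_tendsto_slope.mp hg
  have hratio : Tendsto (fun t => ((deriv l t) ^ 2 - 1) / l t) (𝓝[≠] t0) (𝓝 (2 * L)) := by
    have h := hslope2.div hslope1 he0
    have h2 : (2 * e * L) / e = 2 * L := by field_simp
    rw [h2] at h
    refine Tendsto.congr' ?_ h
    filter_upwards [self_mem_nhdsWithin, hne] with t ht hlt
    have htne : t - t0 ≠ 0 := sub_ne_zero.mpr ht
    rw [Pi.div_apply, slope_def_field, slope_def_field, hz, he, he2]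
    field_simp
    simp
  -- continuous rest
  have hRc : ContinuousAt (fun t => -(deriv l t / t) - χinf * (l t) ^ 2 / t ^ 2
      + (l t) ^ 3 / t ^ 2 + χ0 / t) t0 := by
    have h1 := hd.continuousAt
    have h2 := hl.continuousAt
    have ht2 : (t0 : ℂ) ^ 2 ≠ 0 := pow_ne_zero _ ht0
    exact (((((h1.div continuousAt_id ht0).neg.sub
      ((continuousAt_const.mul (h2.pow 2)).div (continuousAt_id.pow 2) ht2)).add
      ((h2.pow 3).div (continuousAt_id.pow 2) ht2)).add
      (continuousAt_const.div continuousAt_id ht0)))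
  have hRlim : Tendsto (fun t => -(deriv l t / t) - χinf * (l t) ^ 2 / t ^ 2
      + (l t) ^ 3 / t ^ 2 + χ0 / t) (𝓝[≠] t0) (𝓝 (-(e / t0) + χ0 / t0)) := by
    have := hRc.tendsto.mono_left (nhdsWithin_le_nhds (s := {t0}ᶜ))
    simpa [hz, he] using this
  have hF := hratio.add hRlim
  have hLlim : Tendsto (deriv (deriv l)) (𝓝[≠] t0) (𝓝 L) :=
    hdd.continuousAt.tendsto.mono_left (nhdsWithin_le_nhds (s := {t0}ᶜ))
  have hEq : ∀ᶠ t in 𝓝[≠] t0, deriv (deriv l) t =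
      ((deriv l t) ^ 2 - 1) / l t + (-(deriv l t / t) - χinf * (l t) ^ 2 / t ^ 2
        + (l t) ^ 3 / t ^ 2 + χ0 / t) := by
    filter_upwards [heq, hne] with t htq htne
    have h := htq htne
    unfold PIIIp at h
    rw [h]; ring
  have key : L = 2 * L + (-(e / t0) + χ0 / t0) :=
    tendsto_nhds_unique (hLlim.congr' hEq) hF
  linear_combination -key
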